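/- For all natural numbers p ≥ 1, s ≥ 1, and all x, the Fibonacci polynomial identity F_{(2p-1)s}(x) = F_s(x) · ( Σ_{k=0}^{p-1} (-1)^{sk} L_{2(p-k-1)s}(x) − (-1)^{s(p-1)} ) holds. -/

import Mathlib

/-- Fibonacci polynomials evaluated at a real `x`. -/
def fibP : ℕ → ℝ → ℝ
  | 0, _ => 0
  | 1, _ => 1
  | n + 2, x => x * fibP (n + 1) x + fibP n x

/-- Lucas polynomials evaluated at a real `x`. -/
def lucasP : ℕ → ℝ → ℝ
  | 0, _ => 2
  | 1, x => x
  | n + 2, x => x * lucasP (n + 1) x + lucasP n x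

lemma fibP_add (x : ℝ) : ∀ n m : ℕ,
    fibP (m + n + 1) x = fibP (m + 1) x * fibP (n + 1) x + fibP m x * fibP n x := by
  intro n
  induction n using Nat.twoStepInduction with
  | zero => intro m; simp [fibP]
  | one => intro m; simp [fibP]; ring
  | more n ih1 ih2 =>
    intro m
    have h1 : m + (n + 2) + 1 = (m + n + 1) + 2 := by ring
    rw [h1, show fibP ((m + n + 1) + 2) x = x * fibP (m + n + 1 + 1) x + fibP (m + n + 1) x from rfl]
    have h2 : m + n + 1 + 1 = m + (n + 1) + 1 := by ring
    rw [h2, ih2 m, ih1 m,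
      show fibP (n + 2 + 1) x = x * fibP (n + 2) x + fibP (n + 1) x from rfl,
      show fibP (n + 2) x = x * fibP (n + 1) x + fibP n x from rfl]
    ring

lemma docagne (x : ℝ) : ∀ s m : ℕ,
    fibP (m + s) x * fibP (s + 1) x - fibP (m + s + 1) x * fibP s x
      = (-1 : ℝ) ^ s * fibP m x := by
  intro s
  induction s with
  | zero => intro m; simp [fibP]
  | succ s ih =>
    intro m
    have h1 : m + (s + 1) + 1 = (m + s) + 2 := by ring
    rw [h1, show m + (s + 1) = (m + s) + 1 from by ring,
      show fibP (s + 1 + 1) x = x * fibP (s + 1) x + fibP s x from rfl,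
      show fibP ((m + s) + 2) x = x * fibP (m + s + 1) x + fibP (m + s) x from rfl]
    have := ih m
    have goal : fibP (m + s + 1) x * (x * fibP (s + 1) x + fibP s x) -
        (x * fibP (m + s + 1) x + fibP (m + s) x) * fibP (s + 1) x
        = -(fibP (m + s) x * fibP (s + 1) x - fibP (m + s + 1) x * fibP s x) := by ring
    rw [goal, this]
    ring

lemma lucasP_eq (x : ℝ) : ∀ n : ℕ, lucasP (n + 1) x = fibP n x + fibP (n + 2) x := by
  intro n
  induction n using Nat.twoStepInduction with
  | zero => simp [fibP, lucasP]
  | one => simp [fibP, lucasP]; ring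
  | more n ih1 ih2 =>
    rw [show lucasP (n + 2 + 1) x = x * lucasP (n + 2) x + lucasP (n + 1) x from rfl,
      ih2, ih1,
      show fibP (n + 2 + 2) x = x * fibP (n + 2 + 1) x + fibP (n + 2) x from rfl,
      show fibP (n + 2 + 1) x = x * fibP (n + 2) x + fibP (n + 1) x from rfl,
      show fibP (n + 2) x = x * fibP (n + 1) x + fibP n x from rfl]
    ring

lemma key (x : ℝ) (m r : ℕ) :
    fibP (m + 2 * (r + 1)) x
      = fibP (r + 1) x * lucasP (m + (r + 1)) x + (-1 : ℝ) ^ (r + 1) * fibP m x := by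
  have h1 : m + 2 * (r + 1) = (m + r + 1) + r + 1 := by ring
  rw [h1, fibP_add x r (m + r + 1)]
  have h2 : m + (r + 1) = (m + r) + 1 := by ring
  rw [h2, lucasP_eq x (m + r)]
  have hd := docagne x r m
  rw [show m + r + 1 + 1 = m + r + 2 from by omega, pow_succ]
  linear_combination -hd

theorem stmt_0 (p s : ℕ) (hp : 1 ≤ p) (hs : 1 ≤ s) (x : ℝ) :
    fibP ((2 * p - 1) * s) x =
      fibP s x *
        ((∑ k ∈ Finset.range p, (-1 : ℝ) ^ (s * k) * lucasP (2 * (p - k - 1) * s) x)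
          - (-1 : ℝ) ^ (s * (p - 1))) := by
  induction p, hp using Nat.le_induction with
  | base =>
    norm_num [Finset.sum_range_one, lucasP]
  | succ p hp ih =>
    obtain ⟨q, rfl⟩ : ∃ q, p = q + 1 := ⟨p - 1, by omega⟩
    set S := ∑ k ∈ Finset.range (q + 1),
        (-1 : ℝ) ^ (s * k) * lucasP (2 * (q + 1 - k - 1) * s) x with hS
    have hsum : ∑ k ∈ Finset.range (q + 1 + 1),
        (-1 : ℝ) ^ (s * k) * lucasP (2 * (q + 1 + 1 - k - 1) * s) x
        = lucasP (2 * (q + 1) * s) x + (-1 : ℝ) ^ s * S := by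
      rw [Finset.sum_range_succ', hS, Finset.mul_sum, add_comm]
      congr 1
      · norm_num
      · apply Finset.sum_congr rfl
        intro k hk
        rw [show q + 1 + 1 - (k + 1) - 1 = q + 1 - k - 1 from by omega,
          show s * (k + 1) = s + s * k from by ring, pow_add]
        ring
    rw [hsum]
    have hkey := key x ((2 * q + 1) * s) (s - 1)
    rw [show s - 1 + 1 = s from by omega,
      show (2 * q + 1) * s + s = 2 * (q + 1) * s from by ring] at hkey
    rw [show (2 * (q + 1 + 1) - 1) * s = (2 * q + 1) * s + 2 * s from by
      rw [show 2 * (q + 1 + 1) - 1 = 2 * q + 3 from by omega]; ring]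
    rw [hkey]
    rw [show (2 * (q + 1) - 1) * s = (2 * q + 1) * s from by
        rw [show 2 * (q + 1) - 1 = 2 * q + 1 from by omega],
      show q + 1 - 1 = q from by omega] at ih
    rw [ih, show s * (q + 1 + 1 - 1) = s + s * q from by
      rw [show q + 1 + 1 - 1 = q + 1 from by omega]; ring, pow_add]
    ring
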